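/- Let X be a complex Banach space and let T be a bounded C₀-semigroup on X with generator A. Suppose that iσ(A) ∩ ℝ = {0} and that lim_{s→0} max{‖s R(is, A)‖, ‖s R(−is, A)‖} = ∞. Let m be the minimal dominating function for the resolvent of A, given by m(s) = sup{‖R(ir, A)‖ : s ≤ |r| ≤ 1} for s ∈ (0, 1]. Then, for any right-inverse m^{−1} of m, there exist constants c, C > 0 such that ‖T(t) A R(1, A)‖ ≥ c m^{−1}(C t) for all sufficiently large t ≥ 0. -/

import Mathlib

open Filter Topology MeasureTheory Set

namespace KTpaper

variable {X : Type*} [NormedAddCommGroup X] [NormedSpace ℂ X] [CompleteSpace X]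

/-- `T` is a strongly continuous one-parameter semigroup (C₀-semigroup) on `X`;
the values of `T` on `(-∞,0)` are irrelevant. -/
structure IsC0Semigroup (T : ℝ → X →L[ℂ] X) : Prop where
  map_zero : T 0 = 1
  map_add : ∀ s t : ℝ, 0 ≤ s → 0 ≤ t → T (s + t) = (T s).comp (T t)
  strongContinuity : ∀ x : X, ContinuousOn (fun t : ℝ => T t x) (Set.Ici (0 : ℝ))

/-- The semigroup `T` is bounded: `sup_{t ≥ 0} ‖T(t)‖ < ∞`. -/
def IsBoundedSG (T : ℝ → X →L[ℂ] X) : Prop :=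
  ∃ M : ℝ, ∀ t : ℝ, 0 ≤ t → ‖T t‖ ≤ M

/-- The (in general unbounded) partially defined linear operator `A` is the generator
of `T`:  `x ∈ D(A)` with `A x = y` if and only if `(T(t)x - x)/t → y` as `t → 0+`. -/
def IsGenerator (T : ℝ → X →L[ℂ] X) (A : X →ₗ.[ℂ] X) : Prop :=
  ∀ x y : X, (∃ hx : x ∈ A.domain, A ⟨x, hx⟩ = y) ↔
    Filter.Tendsto (fun t : ℝ => (t : ℂ)⁻¹ • (T t x - x))
      (nhdsWithin 0 (Set.Ioi 0)) (nhds y)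

/-- `R` is the resolvent operator `R(lam, A) = (lam - A)⁻¹` of `A` at `lam`. -/
def IsResolventAt (A : X →ₗ.[ℂ] X) (lam : ℂ) (R : X →L[ℂ] X) : Prop :=
  (∀ x : X, ∃ hx : R x ∈ A.domain, lam • R x - A ⟨R x, hx⟩ = x) ∧
  (∀ x : A.domain, R (lam • (x : X) - A x) = x)

/-- The resolvent set `ρ(A)`. -/
def resolventSet (A : X →ₗ.[ℂ] X) : Set ℂ :=
  {lam | ∃ R : X →L[ℂ] X, IsResolventAt A lam R}

/-- The spectrum `σ(A)`. -/
def spec (A : X →ₗ.[ℂ] X) : Set ℂ := (resolventSet A)ᶜ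

/-- The set `iσ(A) ∩ ℝ`, viewed as a set of real numbers:  `s = i·lam` for some
`lam ∈ σ(A)` if and only if `lam = -i·s ∈ σ(A)`. -/
def bSpec (A : X →ₗ.[ℂ] X) : Set ℝ :=
  {s : ℝ | (-Complex.I * (s : ℂ)) ∈ spec A}

/-- The Fourier transform `(F a)(s) = ∫ e^{-i s t} a(t) dt` of `a ∈ L¹(ℝ)`. -/
noncomputable def FT (a : ℝ → ℂ) (s : ℝ) : ℂ :=
  ∫ t : ℝ, Complex.exp (-(Complex.I * (s : ℂ) * (t : ℂ))) * a t

/-- `Λ` is of spectral synthesis: every `a ∈ L¹(ℝ)` whose Fourier transform vanishes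
on `Λ` can be approximated in `L¹`-norm by functions whose Fourier transforms vanish
on an open neighbourhood of `Λ`. -/
def HasSpectralSynthesis (Λ : Set ℝ) : Prop :=
  ∀ a : ℝ → ℂ, MeasureTheory.Integrable a → (∀ s ∈ Λ, FT a s = 0) →
    ∀ ε : ℝ, 0 < ε → ∃ b : ℝ → ℂ, MeasureTheory.Integrable b ∧
      (∃ U : Set ℝ, IsOpen U ∧ Λ ⊆ U ∧ ∀ s ∈ U, FT b s = 0) ∧
      (∫ t : ℝ, ‖a t - b t‖) < ε

/-- The exponential growth bound `ω₀(S)` of a function `S : (0,∞) → B(X)`,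
as an extended real number. -/
noncomputable def growthBound (S : ℝ → X →L[ℂ] X) : EReal :=
  sInf {w : EReal | ∃ ω : ℝ, (ω : EReal) = w ∧
    ∃ M : ℝ, 1 ≤ M ∧ ∀ t : ℝ, 0 < t → ‖S t‖ ≤ M * Real.exp (ω * t)}

/-- The sector `Σ_θ = {λ ≠ 0 : |arg λ| < θ}`. -/
def sector (θ : ℝ) : Set ℂ := {z : ℂ | z ≠ 0 ∧ |Complex.arg z| < θ}

/-- `S` is exponentially bounded on `Ω`. -/
def ExpBoundedOn (S : ℂ → X →L[ℂ] X) (Ω : Set ℂ) : Prop :=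
  ∃ C : ℝ, 0 ≤ C ∧ ∃ ω : ℝ, ∀ z ∈ Ω, ‖S z‖ ≤ C * Real.exp (ω * ‖z‖)

/-- The non-analytic growth bound
`ζ(T) = inf {ω₀(T - S) : S ∈ H(Σ_θ; B(X)) for some θ > 0}`. -/
noncomputable def zeta (T : ℝ → X →L[ℂ] X) : EReal :=
  sInf {w : EReal | ∃ (θ : ℝ) (S : ℂ → X →L[ℂ] X), 0 < θ ∧
    DifferentiableOn ℂ S (sector θ) ∧ ExpBoundedOn S (sector θ) ∧
    growthBound (fun t : ℝ => T t - S (t : ℂ)) = w}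

/-- `T` is asymptotically analytic if `ζ(T) < 0`. -/
def AsymptoticallyAnalytic (T : ℝ → X →L[ℂ] X) : Prop := zeta T < (0 : EReal)

/-- The critical growth bound `δ(T)`: the infimum of `ω₀(T - S)` over all
exponentially bounded `S : (0,∞) → B(X)` that are norm-continuous. -/
noncomputable def delta' (T : ℝ → X →L[ℂ] X) : EReal :=
  sInf {w : EReal | ∃ S : ℝ → X →L[ℂ] X, ContinuousOn S (Set.Ioi 0) ∧
    (∃ C : ℝ, 0 ≤ C ∧ ∃ ω : ℝ, ∀ t : ℝ, 0 < t → ‖S t‖ ≤ C * Real.exp (ω * t)) ∧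
    growthBound (fun t : ℝ => T t - S t) = w}

/-- `s₀^∞(A)`: the infimum of all `α` such that the resolvent of `A` exists and is
uniformly bounded on `Q_{α,β} = {λ : Re λ ≥ α, |Im λ| ≥ β}` for some `β ≥ 0`. -/
noncomputable def s0inf (A : X →ₗ.[ℂ] X) : EReal :=
  sInf {w : EReal | ∃ α : ℝ, (α : EReal) = w ∧ ∃ β : ℝ, 0 ≤ β ∧ ∃ C : ℝ,
    ∀ lam : ℂ, α ≤ lam.re → β ≤ |lam.im| →
      ∃ R : X →L[ℂ] X, IsResolventAt A lam R ∧ ‖R‖ ≤ C}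

section AuxLemmas

variable {T : ℝ → X →L[ℂ] X} {A : X →ₗ.[ℂ] X} {R1 : X →L[ℂ] X} {Rres : ℝ → X →L[ℂ] X}

lemma gen_limit (hA : IsGenerator T A) {x : X} (hx : x ∈ A.domain) :
    Tendsto (fun t : ℝ => (t : ℂ)⁻¹ • (T t x - x)) (𝓝[>] (0:ℝ)) (𝓝 (A ⟨x, hx⟩)) :=
  (hA x _).mp ⟨hx, rfl⟩

lemma gen_limit_real (hA : IsGenerator T A) {x : X} (hx : x ∈ A.domain) :
    Tendsto (fun t : ℝ => t⁻¹ • (T t x - x)) (𝓝[>] (0:ℝ)) (𝓝 (A ⟨x, hx⟩)) := by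
  refine (gen_limit hA hx).congr (fun t => ?_)
  rw [← Complex.ofReal_inv, ← Complex.coe_algebraMap, algebraMap_smul]

lemma T_comm_self (hT : IsC0Semigroup T) {s t : ℝ} (hs : 0 ≤ s) (ht : 0 ≤ t) (x : X) :
    T s (T t x) = T t (T s x) := by
  have h1 := hT.map_add s t hs ht
  have h2 := hT.map_add t s ht hs
  rw [add_comm] at h1
  have : (T s).comp (T t) = (T t).comp (T s) := h1.symm.trans h2
  have := congrArg (fun (B : X →L[ℂ] X) => B x) this
  simpa using this

lemma mem_domain_T (hT : IsC0Semigroup T) (hA : IsGenerator T A) {x : X} (hx : x ∈ A.domain)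
    {t : ℝ} (ht : 0 ≤ t) :
    ∃ h2 : T t x ∈ A.domain, A ⟨T t x, h2⟩ = T t (A ⟨x, hx⟩) := by
  apply (hA (T t x) (T t (A ⟨x, hx⟩))).mpr
  have h1 : Tendsto (fun h : ℝ => T t ((h:ℂ)⁻¹ • (T h x - x))) (𝓝[>] (0:ℝ))
      (𝓝 (T t (A ⟨x,hx⟩))) := ((T t).continuous.tendsto _).comp (gen_limit hA hx)
  refine h1.congr' ?_
  filter_upwards [self_mem_nhdsWithin] with h hh
  have e1 : T h (T t x) = T t (T h x) := T_comm_self hT (le_of_lt hh) ht x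
  rw [_root_.map_smul, map_sub, ← e1]

lemma hasDerivWithinAt_T (hT : IsC0Semigroup T) (hA : IsGenerator T A) {x : X}
    (hx : x ∈ A.domain) {t₀ : ℝ} (ht₀ : 0 ≤ t₀) :
    HasDerivWithinAt (fun τ => T τ x) (T t₀ (A ⟨x,hx⟩)) (Ioi t₀) t₀ := by
  rw [hasDerivWithinAt_iff_tendsto_slope]
  have hId : Ioi t₀ \ {t₀} = Ioi t₀ := by
    ext y; simp only [mem_diff, mem_Ioi, mem_singleton_iff]
    exact ⟨fun h => h.1, fun h => ⟨h, ne_of_gt h⟩⟩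
  rw [hId]
  have hmap : Tendsto (fun τ => τ - t₀) (𝓝[>] t₀) (𝓝[>] (0:ℝ)) := by
    rw [tendsto_nhdsWithin_iff]
    constructor
    · have : Tendsto (fun τ => τ - t₀) (𝓝 t₀) (𝓝 (t₀ - t₀)) :=
        (continuous_id.sub continuous_const).tendsto t₀
      rw [sub_self] at this
      exact this.mono_left nhdsWithin_le_nhds
    · filter_upwards [self_mem_nhdsWithin] with τ hτ
      exact sub_pos.mpr (show t₀ < τ from hτ)
  have comp := ((T t₀).continuous.tendsto _).comp ((gen_limit_real hA hx).comp hmap)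
  refine comp.congr' ?_
  filter_upwards [self_mem_nhdsWithin] with τ hτ
  have hτ' : (0:ℝ) ≤ τ - t₀ := le_of_lt (sub_pos.mpr hτ)
  have e1 : T τ x = T t₀ (T (τ - t₀) x) := by
    have := hT.map_add t₀ (τ - t₀) ht₀ hτ'
    rw [add_sub_cancel] at this
    rw [this]; rfl
  show T t₀ ((τ - t₀)⁻¹ • (T (τ - t₀) x - x)) = slope (fun τ => T τ x) t₀ τ
  rw [slope_def_module, (T t₀).map_smul_of_tower, map_sub, ← e1]


lemma key_integral (hT : IsC0Semigroup T) (hA : IsGenerator T A) {x : X}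
    (hx : x ∈ A.domain) (r t : ℝ) (ht : 0 ≤ t) :
    ∫ τ in (0:ℝ)..t, Complex.exp (-(Complex.I*r*τ)) • (T τ (A ⟨x,hx⟩ - (Complex.I*r) • x))
      = Complex.exp (-(Complex.I*r*t)) • T t x - x := by
  set c : ℝ → ℂ := fun τ => Complex.exp (-(Complex.I*r*τ)) with hcdef
  have hc : Continuous c := by
    apply Complex.continuous_exp.comp
    exact (continuous_const.mul Complex.continuous_ofReal).neg
  have hcder : ∀ τ : ℝ, HasDerivAt c (-(Complex.I*r) * c τ) τ := by
    intro τ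
    have h0 : HasDerivAt (fun τ:ℝ => (τ:ℂ)) 1 τ := by
      exact Complex.ofRealCLM.hasDerivAt (x := τ)
    have h1 : HasDerivAt (fun τ:ℝ => -(Complex.I*r*(τ:ℂ))) (-(Complex.I*r)) τ := by
      have := (h0.const_mul (Complex.I*(r:ℂ))).neg
      rw [mul_one] at this
      exact this
    have := h1.cexp
    simpa [hcdef, mul_comm] using this
  have hcx : ContinuousOn (fun τ => T τ x) (Icc 0 t) :=
    (hT.strongContinuity x).mono Icc_subset_Ici_self
  have hF : ContinuousOn (fun τ => c τ • T τ x) (Icc 0 t) := hc.continuousOn.smul hcx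
  have hG : ∀ τ ∈ Ioo 0 t, HasDerivWithinAt (fun τ => c τ • T τ x)
      (c τ • (T τ (A ⟨x,hx⟩ - (Complex.I*r) • x))) (Ioi τ) τ := by
    intro τ hτ
    have hd := HasDerivWithinAt.smul ((hcder τ).hasDerivWithinAt)
      (hasDerivWithinAt_T hT hA hx hτ.1.le)
    convert hd using 1
    · rfl
    rw [map_sub, _root_.map_smul, smul_sub, smul_smul]
    rw [sub_eq_add_neg, ← neg_smul]
    ring_nf
  have hInt : IntervalIntegrable
      (fun τ => c τ • (T τ (A ⟨x,hx⟩ - (Complex.I*r) • x))) volume 0 t := by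
    apply ContinuousOn.intervalIntegrable
    rw [uIcc_of_le ht]
    exact hc.continuousOn.smul ((hT.strongContinuity _).mono Icc_subset_Ici_self)
  have hres := intervalIntegral.integral_eq_sub_of_hasDeriv_right_of_le ht hF hG hInt
  rw [hres, hcdef]
  simp [hT.map_zero]

lemma res_mem {lam : ℂ} {R : X →L[ℂ] X} (hR : IsResolventAt A lam R) (w : X) :
    R w ∈ A.domain := (hR.1 w).choose

lemma res_val {lam : ℂ} {R : X →L[ℂ] X} (hR : IsResolventAt A lam R) (w : X)
    (hx : R w ∈ A.domain) : A ⟨R w, hx⟩ = lam • R w - w := by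
  obtain ⟨hx', hval⟩ := hR.1 w
  have : A ⟨R w, hx⟩ = A ⟨R w, hx'⟩ := rfl
  rw [this]
  have := hval
  linear_combination (norm := module) -this

lemma T_comm_res (hT : IsC0Semigroup T) (hA : IsGenerator T A) {lam : ℂ} {R : X →L[ℂ] X}
    (hR : IsResolventAt A lam R) {t : ℝ} (ht : 0 ≤ t) (v : X) :
    T t (R v) = R (T t v) := by
  obtain ⟨hx, hval⟩ := hR.1 v
  obtain ⟨hx2, hval2⟩ := mem_domain_T hT hA hx ht
  have h2 := hR.2 ⟨T t (R v), hx2⟩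
  simp only at h2
  rw [hval2] at h2
  have e : lam • T t (R v) - T t (A ⟨R v, hx⟩) = T t v := by
    rw [← _root_.map_smul, ← map_sub, hval]
  rw [e] at h2
  exact h2.symm

variable {R1 : X →L[ℂ] X}

lemma res_comb (hR1 : IsResolventAt A 1 R1) {r : ℝ} {Rr : X →L[ℂ] X}
    (hRr : IsResolventAt A (Complex.I*r) Rr) (z : X) :
    Rr ((R1 - 1) z) = (Complex.I*r-1)⁻¹ • R1 z
      - ((Complex.I*r)*(Complex.I*r-1)⁻¹) • Rr z := by
  set lam := Complex.I*(r:ℂ) with hlamdef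
  have hlam : lam - 1 ≠ 0 := by
    intro h
    have := congrArg Complex.re h
    simp [hlamdef, Complex.ext_iff] at this
  obtain ⟨hx1, _⟩ := hR1.1 z
  have hA1 : A ⟨R1 z, hx1⟩ = R1 z - z := by
    have h := res_val hR1 z hx1
    rw [h, one_smul]
  have h2 := hRr.2 ⟨R1 z, hx1⟩
  simp only at h2
  rw [hA1] at h2
  have e : lam • R1 z - (R1 z - z) = (lam-1) • R1 z + z := by module
  rw [e, map_add, _root_.map_smul] at h2
  have h3 : Rr (R1 z) = (lam-1)⁻¹ • (R1 z - Rr z) := by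
    have h4 : (lam-1) • Rr (R1 z) = R1 z - Rr z := by
      linear_combination (norm := module) h2
    rw [← h4, inv_smul_smul₀ hlam]
  have e2 : (R1 - 1) z = R1 z - z := by
    simp [ContinuousLinearMap.sub_apply]
  rw [e2, map_sub, h3]
  have e3 : lam * (lam-1)⁻¹ = (lam-1)⁻¹ + 1 := by
    field_simp
    ring
  rw [e3]
  have h5 := hRr.2 ⟨R1 z, hx1⟩
  module

lemma res_comb_norm (hR1 : IsResolventAt A 1 R1) {r : ℝ} {Rr : X →L[ℂ] X}
    (hRr : IsResolventAt A (Complex.I*r) Rr) (hr1 : |r| ≤ 1) (z : X) :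
    (|r|/2) * ‖Rr z‖ - ‖R1 z‖ ≤ ‖Rr ((R1 - 1) z)‖ := by
  rw [res_comb hR1 hRr z]
  set lam := Complex.I*(r:ℂ) with hlamdef
  have habs : ‖lam‖ = |r| := by
    rw [hlamdef, norm_mul, Complex.norm_I, Complex.norm_real, Real.norm_eq_abs, one_mul]
  have hge : (1:ℝ) ≤ ‖lam - 1‖ := by
    have h1 : |(lam - 1).re| ≤ ‖lam-1‖ := Complex.abs_re_le_norm _
    have h2 : (lam - 1).re = -1 := by simp [hlamdef]
    rw [h2] at h1; simpa using h1
  have hle : ‖lam - 1‖ ≤ 2 := by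
    calc ‖lam - 1‖ ≤ ‖lam‖ + ‖(1:ℂ)‖ := norm_sub_le _ _
    _ ≤ 2 := by rw [habs]; simp; linarith
  have hpos : (0:ℝ) < ‖lam - 1‖ := lt_of_lt_of_le one_pos hge
  have e1 : ‖(lam*(lam-1)⁻¹) • Rr z‖ = (‖lam‖/‖lam-1‖) * ‖Rr z‖ := by
    rw [norm_smul, norm_mul, norm_inv]; ring
  have e2 : ‖(lam-1)⁻¹ • R1 z‖ ≤ ‖R1 z‖ := by
    rw [norm_smul, norm_inv]
    have : ‖(lam-1)‖⁻¹ ≤ 1 := by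
      rw [inv_le_one_iff₀]; right; exact hge
    nlinarith [norm_nonneg (R1 z)]
  have e3 : (|r|/2) * ‖Rr z‖ ≤ (‖lam‖/‖lam-1‖) * ‖Rr z‖ := by
    apply mul_le_mul_of_nonneg_right _ (norm_nonneg _)
    rw [habs]
    exact div_le_div_of_nonneg_left (abs_nonneg r) hpos hle
  have e4 : ‖(lam*(lam-1)⁻¹) • Rr z‖ - ‖(lam-1)⁻¹ • R1 z‖ ≤
      ‖(lam-1)⁻¹ • R1 z - (lam*(lam-1)⁻¹) • Rr z‖ := by
    rw [norm_sub_rev]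
    exact norm_sub_norm_le _ _
  rw [e1] at e4
  linarith
lemma res_id {r r' : ℝ} {Rr Rr' : X →L[ℂ] X} (h1 : IsResolventAt A (Complex.I*r) Rr)
    (h2 : IsResolventAt A (Complex.I*r') Rr') (z : X) :
    Rr' z - Rr z = ((Complex.I*r) - (Complex.I*r')) • Rr (Rr' z) := by
  obtain ⟨hx, _⟩ := h2.1 z
  have hAv : A ⟨Rr' z, hx⟩ = (Complex.I*r') • Rr' z - z := res_val h2 z hx
  have hh := h1.2 ⟨Rr' z, hx⟩
  simp only at hh
  rw [hAv] at hh
  have e : (Complex.I*r) • Rr' z - ((Complex.I*r') • Rr' z - z)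
      = ((Complex.I*r) - (Complex.I*r')) • Rr' z + z := by module
  rw [e, map_add, _root_.map_smul] at hh
  linear_combination (norm := module) -hh

lemma res_lip {r r' : ℝ} {Rr Rr' : X →L[ℂ] X} (h1 : IsResolventAt A (Complex.I*r) Rr)
    (h2 : IsResolventAt A (Complex.I*r') Rr') :
    ‖Rr' - Rr‖ ≤ |r - r'| * (‖Rr‖ * ‖Rr'‖) := by
  apply ContinuousLinearMap.opNorm_le_bound
  · positivity
  intro z
  rw [ContinuousLinearMap.sub_apply, res_id h1 h2 z, norm_smul]
  have e : ‖(Complex.I*(r:ℂ)) - (Complex.I*r')‖ = |r - r'| := by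
    rw [← mul_sub, norm_mul, Complex.norm_I, one_mul, ← Complex.ofReal_sub,
      Complex.norm_real, Real.norm_eq_abs]
  rw [e]
  have b1 : ‖Rr (Rr' z)‖ ≤ ‖Rr‖ * ‖Rr' z‖ := Rr.le_opNorm _
  have b2 : ‖Rr' z‖ ≤ ‖Rr'‖ * ‖z‖ := Rr'.le_opNorm _
  have c1 : ‖Rr (Rr' z)‖ ≤ ‖Rr‖ * (‖Rr'‖ * ‖z‖) :=
    b1.trans (mul_le_mul_of_nonneg_left b2 (norm_nonneg Rr))
  calc |r - r'| * ‖Rr (Rr' z)‖ ≤ |r - r'| * (‖Rr‖ * (‖Rr'‖ * ‖z‖)) :=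
        mul_le_mul_of_nonneg_left c1 (abs_nonneg _)
  _ = |r - r'| * (‖Rr‖ * ‖Rr'‖) * ‖z‖ := by ring

lemma g_bound {r r' : ℝ} {Rr Rr' : X →L[ℂ] X} (h1 : IsResolventAt A (Complex.I*r) Rr)
    (h2 : IsResolventAt A (Complex.I*r') Rr') (hsmall : |r - r'| * ‖Rr'‖ ≤ 1/2) :
    ‖Rr‖ ≤ 2 * ‖Rr'‖ := by
  have hl := res_lip h2 h1
  have htri : ‖Rr‖ ≤ ‖Rr'‖ + ‖Rr - Rr'‖ := by
    have := norm_sub_norm_le Rr Rr'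
    linarith [abs_norm_sub_norm_le Rr Rr']
  have he : |r' - r| = |r - r'| := abs_sub_comm _ _
  rw [he] at hl
  nlinarith [norm_nonneg Rr, norm_nonneg Rr', abs_nonneg (r-r')]

lemma g_cont {r r' : ℝ} {Rr Rr' : X →L[ℂ] X} (h1 : IsResolventAt A (Complex.I*r) Rr)
    (h2 : IsResolventAt A (Complex.I*r') Rr') (hsmall : |r - r'| * ‖Rr'‖ ≤ 1/2) :
    |‖Rr‖ - ‖Rr'‖| ≤ 2 * |r - r'| * ‖Rr'‖^2 := by
  have hb := g_bound h1 h2 hsmall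
  have hl := res_lip h2 h1
  have he : |r' - r| = |r - r'| := abs_sub_comm _ _
  rw [he] at hl
  have htri : |‖Rr‖ - ‖Rr'‖| ≤ ‖Rr - Rr'‖ := abs_norm_sub_norm_le _ _
  have key : |r - r'| * (‖Rr'‖ * ‖Rr‖) ≤ 2 * |r - r'| * ‖Rr'‖^2 := by
    have h0 : (0:ℝ) ≤ |r - r'| * ‖Rr'‖ := mul_nonneg (abs_nonneg _) (norm_nonneg _)
    calc |r - r'| * (‖Rr'‖ * ‖Rr‖) = (|r - r'| * ‖Rr'‖) * ‖Rr‖ := by ring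
    _ ≤ (|r - r'| * ‖Rr'‖) * (2 * ‖Rr'‖) := mul_le_mul_of_nonneg_left hb h0
    _ = 2 * |r - r'| * ‖Rr'‖^2 := by ring
  linarith
variable {Rres : ℝ → X →L[ℂ] X}

lemma m_mem {m : ℝ → ℝ}
    (hm : ∀ s : ℝ, 0 < s → s ≤ 1 →
      IsLUB {y : ℝ | ∃ r : ℝ, s ≤ |r| ∧ |r| ≤ 1 ∧ y = ‖Rres r‖} (m s))
    {s r : ℝ} (hs : 0 < s) (hs1 : s ≤ 1) (h1 : s ≤ |r|) (h2 : |r| ≤ 1) :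
    ‖Rres r‖ ≤ m s := (hm s hs hs1).1 ⟨r, h1, h2, rfl⟩

lemma m_anti {m : ℝ → ℝ}
    (hm : ∀ s : ℝ, 0 < s → s ≤ 1 →
      IsLUB {y : ℝ | ∃ r : ℝ, s ≤ |r| ∧ |r| ≤ 1 ∧ y = ‖Rres r‖} (m s))
    {s s' : ℝ} (hs : 0 < s) (hss' : s ≤ s') (hs' : s' ≤ 1) : m s' ≤ m s := by
  apply (hm s' (lt_of_lt_of_le hs hss') hs').2
  rintro w ⟨r, ha, hb, rfl⟩
  exact (hm s hs (hss'.trans hs')).1 ⟨r, le_trans hss' ha, hb, rfl⟩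

lemma g_near (hRres : ∀ r : ℝ, 0 < |r| → |r| ≤ 1 → IsResolventAt A (Complex.I*r) (Rres r))
    {a b : ℝ} (ha : 0 < |a|) (ha1 : |a| ≤ 1) (hb : 0 < |b|) (hb1 : |b| ≤ 1)
    (hsmall : |a - b| * ‖Rres b‖ ≤ 1/2) :
    ‖Rres a‖ ≤ ‖Rres b‖ + 2 * |a - b| * ‖Rres b‖^2 ∧
      ‖Rres b‖ ≤ ‖Rres a‖ + 2 * |a - b| * ‖Rres b‖^2 := by
  have h := g_cont (hRres a ha ha1) (hRres b hb hb1) hsmall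
  have h2 := abs_le.mp h
  exact ⟨by linarith [h2.2], by linarith [h2.1]⟩

lemma mono2 {x x' g G : ℝ} (hx : 0 ≤ x) (hxx : x ≤ x') (hg : 0 ≤ g) (hgG : g ≤ G) :
    2*x*g^2 ≤ 2*x'*G^2 := by
  have h1 : g^2 ≤ G^2 := pow_le_pow_left₀ hg hgG 2
  have h2 := mul_le_mul hxx h1 (by positivity) (le_trans hx hxx)
  linarith

lemma m_surj (hRres : ∀ r : ℝ, 0 < |r| → |r| ≤ 1 → IsResolventAt A (Complex.I*r) (Rres r))
    {m : ℝ → ℝ}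
    (hm : ∀ s : ℝ, 0 < s → s ≤ 1 →
      IsLUB {y : ℝ | ∃ r : ℝ, s ≤ |r| ∧ |r| ≤ 1 ∧ y = ‖Rres r‖} (m s))
    {y δ' : ℝ} (hy1 : m 1 ≤ y) (hδ0 : 0 < δ') (hδ1 : δ' ≤ 1)
    (hbig : ∀ s, 0 < s → s < δ' → y < m s) :
    ∃ s ∈ Ioc (0:ℝ) 1, m s = y := by
  set Q := {s : ℝ | s ∈ Ioc (0:ℝ) 1 ∧ m s ≤ y} with hQdef
  have hQ1 : (1:ℝ) ∈ Q := ⟨⟨one_pos, le_refl 1⟩, hy1⟩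
  have hQne : Q.Nonempty := ⟨1, hQ1⟩
  have hQbd : BddBelow Q := ⟨0, fun q hq => (hq.1.1).le⟩
  set s0 := sInf Q with hs0def
  have hs0_le1 : s0 ≤ 1 := csInf_le hQbd hQ1
  have hlb : ∀ q ∈ Q, δ' ≤ q := by
    intro q hq
    by_contra h
    push_neg at h
    exact absurd hq.2 (not_le.mpr (hbig q hq.1.1 h))
  have hδs0 : δ' ≤ s0 := le_csInf hQne hlb
  have hs0_pos : 0 < s0 := lt_of_lt_of_le hδ0 hδs0
  have hs0abs : |s0| = s0 := abs_of_pos hs0_pos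
  have hs0absneg : |(-s0)| = s0 := by rw [abs_neg, hs0abs]
  have claimA : ∀ s, s0 < s → s ≤ 1 → m s ≤ y := by
    intro s hs hs1
    obtain ⟨q, hqQ, hq⟩ : ∃ q ∈ Q, q < s := by
      by_contra h
      push_neg at h
      have : s ≤ s0 := le_csInf hQne h
      linarith
    exact le_trans (m_anti hm hqQ.1.1 hq.le hs1) hqQ.2
  have gle : ∀ r : ℝ, s0 < |r| → |r| ≤ 1 → ‖Rres r‖ ≤ y := by
    intro r h h1
    exact le_trans (m_mem hm (lt_trans hs0_pos h) h1 le_rfl h1) (claimA |r| h h1)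
  -- boundary values
  have gs0 : ∀ σ : ℝ, |σ| = s0 → ‖Rres σ‖ ≤ y := by
    intro σ hσ
    rcases eq_or_lt_of_le hs0_le1 with hcase | hcase
    · exact le_trans (m_mem hm one_pos le_rfl (by rw [hσ]; exact hcase.ge) (hσ.le.trans hs0_le1)) hy1
    · by_contra hcon
      push_neg at hcon
      set G := ‖Rres σ‖ with hGdef
      set ε := (G - y)/2 with hεdef
      have hε : 0 < ε := by rw [hεdef]; linarith
      set h0 := min (1 - s0) (min (1/(2*G+1)) (ε/(2*G^2+1))) with hh0def
      have hGnn : 0 ≤ G := norm_nonneg _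
      have hh0pos : 0 < h0 := by
        apply lt_min (by linarith)
        exact lt_min (by apply div_pos one_pos; linarith) (by apply div_pos hε; positivity)
      have hh0a : h0 ≤ 1 - s0 := min_le_left _ _
      have hh0b : h0 ≤ 1/(2*G+1) := le_trans (min_le_right _ _) (min_le_left _ _)
      have hh0c : h0 ≤ ε/(2*G^2+1) := le_trans (min_le_right _ _) (min_le_right _ _)
      -- the comparison point: same sign as σ, absolute value s0 + h0
      have hσne : σ = s0 ∨ σ = -s0 := by
        rcases abs_eq hs0_pos.le |>.mp hσ with h | h
        · exact Or.inl h
        · exact Or.inr h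
      set σ' := if σ = s0 then s0 + h0 else -(s0 + h0) with hσ'def
      have hσ'abs : |σ'| = s0 + h0 := by
        rcases hσne with h | h
        · rw [hσ'def, if_pos h, abs_of_pos (by linarith)]
        · have hne : σ ≠ s0 := by rw [h]; intro hh; linarith
          rw [hσ'def, if_neg hne, abs_neg, abs_of_pos (by linarith)]
      have hdiff : |σ' - σ| = h0 := by
        rcases hσne with h | h
        · rw [hσ'def, if_pos h, h]
          have e : s0 + h0 - s0 = h0 := by ring
          rw [e, abs_of_pos hh0pos]
        · have hne : σ ≠ s0 := by rw [h]; intro hh; linarith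
          rw [hσ'def, if_neg hne, h]
          have e : -(s0 + h0) - -s0 = -h0 := by ring
          rw [e, abs_neg, abs_of_pos hh0pos]
      have hσpos : 0 < |σ| := by rw [hσ]; exact hs0_pos
      have hσ1 : |σ| ≤ 1 := hσ.le.trans hs0_le1
      have hσ'pos : 0 < |σ'| := by rw [hσ'abs]; linarith
      have hσ'1 : |σ'| ≤ 1 := by rw [hσ'abs]; linarith
      have hsmall : |σ' - σ| * ‖Rres σ‖ ≤ 1/2 := by
        rw [hdiff, ← hGdef]
        calc h0 * G ≤ (1/(2*G+1)) * G := mul_le_mul_of_nonneg_right hh0b hGnn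
        _ ≤ 1/2 := by
            rw [div_mul_eq_mul_div, div_le_div_iff₀ (by positivity) (by norm_num)]
            nlinarith
      have hnear := (g_near hRres hσ'pos hσ'1 hσpos hσ1 hsmall).2
      have hRσ' : ‖Rres σ'‖ ≤ y := gle σ' (by rw [hσ'abs]; linarith) hσ'1
      rw [hdiff, ← hGdef] at hnear
      have herr : 2 * h0 * G^2 ≤ ε := by
        have h1 : h0 * (2*G^2+1) ≤ ε := by
          rw [← le_div_iff₀ (by positivity)]
          exact hh0c
        have e : h0*(2*G^2+1) = 2*h0*G^2 + h0 := by ring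
        linarith
      linarith [hnear, hRσ', herr, hε]
  -- m s0 ≤ y
  have hms0le : m s0 ≤ y := by
    apply (hm s0 hs0_pos hs0_le1).2
    rintro w ⟨r, hr1, hr2, rfl⟩
    rcases eq_or_lt_of_le hr1 with h | h
    · exact gs0 r h.symm
    · exact gle r h hr2
  -- m s0 ≥ y
  have hms0ge : y ≤ m s0 := by
    by_contra hcon
    push_neg at hcon
    set ε0 := y - m s0 with hε0def
    have hε0 : 0 < ε0 := by rw [hε0def]; linarith
    set Gp := ‖Rres s0‖ with hGpdef
    set Gm := ‖Rres (-s0)‖ with hGmdef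
    set G := max Gp Gm with hGdef
    have hGnn : 0 ≤ G := le_trans (norm_nonneg _) (le_max_left _ _)
    have hGpm : Gp ≤ m s0 := m_mem hm hs0_pos hs0_le1 (by rw [hs0abs]) (by rw [hs0abs]; exact hs0_le1)
    have hGmm : Gm ≤ m s0 := m_mem hm hs0_pos hs0_le1 (by rw [hs0absneg]) (by rw [hs0absneg]; exact hs0_le1)
    set h0 := min (s0/2) (min (1/(2*G+1)) (ε0/(2*(2*G^2+1)))) with hh0def
    have hh0pos : 0 < h0 := by
      apply lt_min (by linarith)
      exact lt_min (by apply div_pos one_pos; linarith) (by apply div_pos hε0; positivity)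
    have hh0a : h0 ≤ s0/2 := min_le_left _ _
    have hh0b : h0 ≤ 1/(2*G+1) := le_trans (min_le_right _ _) (min_le_left _ _)
    have hh0c : h0 ≤ ε0/(2*(2*G^2+1)) := le_trans (min_le_right _ _) (min_le_right _ _)
    set s := s0 - h0 with hsdef
    have hspos : 0 < s := by rw [hsdef]; linarith
    have hs1 : s ≤ 1 := by rw [hsdef]; linarith
    have herr2 : 2 * h0 * G^2 < ε0 := by
      have h1 : h0 * (2*(2*G^2+1)) ≤ ε0 := by
        rw [← le_div_iff₀ (by positivity)]
        exact hh0c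
      have e : h0*(2*(2*G^2+1)) = 4*h0*G^2 + 2*h0 := by ring
      have hnn : 0 ≤ h0*G^2 := by positivity
      linarith
    have hub2 : m s ≤ m s0 + 2 * h0 * G^2 := by
      apply (hm s hspos hs1).2
      rintro w ⟨r, hr1, hr2, rfl⟩
      by_cases hc : s0 ≤ |r|
      · have h1 := m_mem hm hs0_pos hs0_le1 hc hr2
        have hnn : 0 ≤ 2*h0*G^2 := by positivity
        linarith
      · push_neg at hc
        have hrne : r ≠ 0 := by
          intro h
          rw [h, abs_zero] at hr1
          linarith
        set σ := if 0 < r then s0 else -s0 with hσdef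
        have hσabs : |σ| = s0 := by
          rcases lt_or_gt_of_ne hrne with h | h
          · rw [hσdef, if_neg (by linarith), abs_neg, hs0abs]
          · rw [hσdef, if_pos h, hs0abs]
        have hdiff : |r - σ| ≤ h0 := by
          rcases lt_or_gt_of_ne hrne with h | h
          · have e : σ = -s0 := by rw [hσdef, if_neg (by linarith)]
            rw [e]
            have habsr : |r| = -r := abs_of_neg h
            rw [abs_le]
            rw [habsr] at hr1 hc
            rw [hsdef] at hr1
            constructor <;> linarith
          · have e : σ = s0 := by rw [hσdef, if_pos h]
            rw [e]
            have habsr : |r| = r := abs_of_pos h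
            rw [abs_le]
            rw [habsr] at hr1 hc
            rw [hsdef] at hr1
            constructor <;> linarith
        have hσpos : 0 < |σ| := by rw [hσabs]; exact hs0_pos
        have hσ1 : |σ| ≤ 1 := by rw [hσabs]; exact hs0_le1
        have hrpos : 0 < |r| := lt_of_lt_of_le hspos hr1
        have hRσG : ‖Rres σ‖ ≤ G := by
          rcases lt_or_gt_of_ne hrne with h | h
          · have e : σ = -s0 := by rw [hσdef, if_neg (by linarith)]
            rw [e]; exact le_max_right _ _
          · have e : σ = s0 := by rw [hσdef, if_pos h]
            rw [e]; exact le_max_left _ _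
        have hsmall : |r - σ| * ‖Rres σ‖ ≤ 1/2 := by
          calc |r - σ| * ‖Rres σ‖ ≤ h0 * G :=
            mul_le_mul hdiff hRσG (norm_nonneg _) hh0pos.le
          _ ≤ (1/(2*G+1)) * G := mul_le_mul_of_nonneg_right hh0b hGnn
          _ ≤ 1/2 := by
              rw [div_mul_eq_mul_div, div_le_div_iff₀ (by positivity) (by norm_num)]
              nlinarith
        have hnear := (g_near hRres hrpos hr2 hσpos hσ1 hsmall).1
        have hbd : 2 * |r - σ| * ‖Rres σ‖^2 ≤ 2 * h0 * G^2 :=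
          mono2 (abs_nonneg _) hdiff (norm_nonneg _) hRσG
        have hRσm : ‖Rres σ‖ ≤ m s0 := by
          rcases lt_or_gt_of_ne hrne with h | h
          · have e : σ = -s0 := by rw [hσdef, if_neg (by linarith)]
            rw [e]; exact hGmm
          · have e : σ = s0 := by rw [hσdef, if_pos h]
            rw [e]; exact hGpm
        linarith
    have hsQ : s ∈ Q := ⟨⟨hspos, hs1⟩, by linarith⟩
    have hfin : s0 ≤ s := csInf_le hQbd hsQ
    rw [hsdef] at hfin
    linarith
  exact ⟨s0, ⟨hs0_pos, hs0_le1⟩, le_antisymm hms0le hms0ge⟩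
lemma exp_norm_one (r τ : ℝ) : ‖Complex.exp (-(Complex.I*r*τ))‖ = 1 := by
  rw [Complex.norm_exp]
  have : (-(Complex.I*(r:ℂ)*(τ:ℂ))).re = 0 := by simp
  rw [this, Real.exp_zero]

lemma exists_good_vector (B : X →L[ℂ] X) (hB : 0 < ‖B‖) :
    ∃ z : X, ‖z‖ ≤ 1 ∧ (3/4) * ‖B‖ < ‖B z‖ := by
  by_contra hcontra
  push_neg at hcontra
  have hbnd : ‖B‖ ≤ (3/4) * ‖B‖ := by
    apply ContinuousLinearMap.opNorm_le_bound _ (by positivity)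
    intro x
    rcases eq_or_ne x 0 with h | h
    · simp [h]
    · have hx : 0 < ‖x‖ := norm_pos_iff.mpr h
      set u := ‖x‖⁻¹ • x with hudef
      have hu : ‖u‖ ≤ 1 := by
        rw [hudef, norm_smul, norm_inv, norm_norm, inv_mul_cancel₀ (ne_of_gt hx)]
      have h2 := hcontra u hu
      have e : B u = ‖x‖⁻¹ • B x := by
        rw [hudef, B.map_smul_of_tower]
      have e2 : ‖B u‖ = ‖x‖⁻¹ * ‖B x‖ := by
        rw [e, norm_smul, norm_inv, norm_norm]
      rw [e2] at h2
      have h3 : ‖x‖ * (‖x‖⁻¹ * ‖B x‖) ≤ ‖x‖ * (3/4 * ‖B‖) :=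
        mul_le_mul_of_nonneg_left h2 hx.le
      rw [← mul_assoc, mul_inv_cancel₀ (ne_of_gt hx), one_mul] at h3
      linarith
  nlinarith

lemma final_arith {s₀ a N F M R D t : ℝ}
    (hD : D = M*(R+1)) (hM : 1 ≤ M) (hR : 0 ≤ R) (ht : 1 ≤ t)
    (hs₀a : s₀ ≤ a) (ha1 : a ≤ 1) (hs₀pos : 0 < s₀)
    (hst : 3 ≤ s₀ * t) (hN : 8*D*t ≤ N) (hF : 0 ≤ F)
    (hmaster : (3/8)*a*N ≤ M*R + 2*R + a*t*M*R + N*F) :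
    s₀/8 ≤ F := by
  have hDge1 : 1 ≤ D := by nlinarith
  have hNpos : 0 < N := by nlinarith
  have hapos : 0 < a := lt_of_lt_of_le hs₀pos hs₀a
  have c1 : 3 * D ≤ s₀ * t * D := by nlinarith
  have c2 : s₀ * t * D ≤ a * t * D := by nlinarith
  have c3 : M*R + 2*R ≤ 3*D := by nlinarith
  have c4 : a*t*M*R ≤ a*t*D := by nlinarith
  have c5 : 2*a*D*t ≤ (a/4)*N := by nlinarith
  have c6 : (s₀/8)*N ≤ (3/8)*a*N - (a/4)*N := by nlinarith
  have c7 : (s₀/8)*N ≤ N*F := by nlinarith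
  have c8 : (s₀/8)*N ≤ F*N := by linarith
  exact le_of_mul_le_mul_right c8 hNpos

set_option maxHeartbeats 2000000 in
theorem lower_bound_decay'
    (T : ℝ → X →L[ℂ] X) (A : X →ₗ.[ℂ] X)
    (hT : IsC0Semigroup T) (hTb : IsBoundedSG T) (hA : IsGenerator T A)
    (R1 : X →L[ℂ] X) (hR1 : IsResolventAt A 1 R1)
    (Rres : ℝ → X →L[ℂ] X)
    (hRres : ∀ r : ℝ, 0 < |r| → |r| ≤ 1 → IsResolventAt A (Complex.I * (r : ℂ)) (Rres r))
    (hL : ∀ K : ℝ, ∃ δ : ℝ, 0 < δ ∧ δ ≤ 1 ∧ ∀ s : ℝ, 0 < |s| → |s| < δ →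
      K ≤ max (|s| * ‖Rres s‖) (|s| * ‖Rres (-s)‖))
    (m : ℝ → ℝ)
    (hm : ∀ s : ℝ, 0 < s → s ≤ 1 →
      IsLUB {y : ℝ | ∃ r : ℝ, s ≤ |r| ∧ |r| ≤ 1 ∧ y = ‖Rres r‖} (m s))
    (minv : ℝ → ℝ)
    (hminv : ∀ y : ℝ, (∃ s ∈ Set.Ioc (0 : ℝ) 1, m s = y) →
      minv y ∈ Set.Ioc (0 : ℝ) 1 ∧ m (minv y) = y) :
    ∃ c C : ℝ, 0 < c ∧ 0 < C ∧ ∃ t₀ : ℝ, ∀ t : ℝ, t₀ ≤ t →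
      c * minv (C * t) ≤ ‖(T t).comp (R1 - 1)‖ := by
  obtain ⟨M', hM'⟩ := hTb
  set M := max M' 1 with hMdef
  have hM1 : 1 ≤ M := le_max_right _ _
  have hM : ∀ t : ℝ, 0 ≤ t → ‖T t‖ ≤ M := fun t ht => (hM' t ht).trans (le_max_left _ _)
  set R := ‖R1‖ with hRdef
  have hR0 : 0 ≤ R := norm_nonneg _
  set D := M * (R + 1) with hDdef
  have hD1 : 1 ≤ D := by nlinarith
  set C := 16 * D with hCdef
  have hC0 : 0 < C := by linarith
  obtain ⟨δ, hδ0, hδ1, hδ⟩ := hL (48 * D + 1)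
  set B := m δ with hBdef
  refine ⟨1/8, C, by norm_num, hC0, max ((B+1)/C) (max 1 ((m 1 + 1)/C)), ?_⟩
  intro t ht
  have ht1 : 1 ≤ t := le_trans (le_trans (le_max_left _ _) (le_max_right _ _)) ht
  have ht0 : 0 ≤ t := by linarith
  have hCtB : B + 1 ≤ C * t := by
    have h1 : (B+1)/C ≤ t := le_trans (le_max_left _ _) ht
    rw [div_le_iff₀ hC0] at h1
    linarith [h1]
  have hCtm1 : m 1 + 1 ≤ C * t := by
    have h1 : (m 1 + 1)/C ≤ t := le_trans (le_trans (le_max_right _ _) (le_max_right _ _)) ht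
    rw [div_le_iff₀ hC0] at h1
    linarith [h1]
  have hCt0 : 0 < C * t := by positivity
  -- C * t is in the range of m
  obtain ⟨δy, hδy0, hδy1, hδy⟩ := hL (C * t + 1)
  have hbig : ∀ s, 0 < s → s < δy → C * t < m s := by
    intro s hs hsδ
    have habs : |s| = s := abs_of_pos hs
    have h1 := hδy s (by rw [habs]; exact hs) (by rw [habs]; exact hsδ)
    rw [habs] at h1
    have hs1 : s ≤ 1 := by linarith
    have h2 : ‖Rres s‖ ≤ m s := m_mem hm hs hs1 (by rw [habs]) (by rw [habs]; exact hs1)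
    have h3 : ‖Rres (-s)‖ ≤ m s := m_mem hm hs hs1 (by rw [abs_neg, habs]) (by rw [abs_neg, habs]; exact hs1)
    have h4 : max (s * ‖Rres s‖) (s * ‖Rres (-s)‖) ≤ s * m s := by
      apply max_le <;> exact mul_le_mul_of_nonneg_left (by assumption) hs.le
    have h5 : s * m s ≤ m s := by nlinarith [le_trans h1 h4, norm_nonneg (Rres s)]
    nlinarith [le_trans h1 h4]
  have hsurj := m_surj hRres hm (y := C * t) (by linarith) hδy0 hδy1 hbig
  obtain ⟨hminvIoc, hminvm⟩ := hminv (C * t) hsurj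
  set s₀ := minv (C * t) with hs₀def
  have hs₀pos : 0 < s₀ := hminvIoc.1
  have hs₀le1 : s₀ ≤ 1 := hminvIoc.2
  have hs₀abs : |s₀| = s₀ := abs_of_pos hs₀pos
  -- s₀ < δ
  have hs₀δ : s₀ < δ := by
    by_contra hcon
    push_neg at hcon
    have := m_anti hm hδ0 hcon hs₀le1
    rw [hminvm, ← hBdef] at this
    linarith
  -- key quantitative bound : 48 D + 1 ≤ s₀ * (C * t)
  have hst : 48 * D + 1 ≤ s₀ * (C * t) := by
    have h1 := hδ s₀ (by rw [hs₀abs]; exact hs₀pos) (by rw [hs₀abs]; exact hs₀δ)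
    rw [hs₀abs] at h1
    have h2 : ‖Rres s₀‖ ≤ m s₀ := m_mem hm hs₀pos hs₀le1 (by rw [hs₀abs]) (by rw [hs₀abs]; exact hs₀le1)
    have h3 : ‖Rres (-s₀)‖ ≤ m s₀ := m_mem hm hs₀pos hs₀le1 (by rw [abs_neg, hs₀abs]) (by rw [abs_neg, hs₀abs]; exact hs₀le1)
    have h4 : max (s₀ * ‖Rres s₀‖) (s₀ * ‖Rres (-s₀)‖) ≤ s₀ * m s₀ := by
      apply max_le <;> exact mul_le_mul_of_nonneg_left (by assumption) hs₀pos.le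
    rw [hminvm] at h4
    linarith [le_trans h1 h4]
  have hst3 : 3 ≤ s₀ * t := by nlinarith
  -- near-maximizer r
  obtain ⟨w', ⟨r, hr1, hr2, rfl⟩, hw1, -⟩ :=
    (hm s₀ hs₀pos hs₀le1).exists_between (b := 8 * D * t) (by rw [hminvm]; nlinarith)
  set N := ‖Rres r‖ with hNdef
  have hNbig : 8 * D * t ≤ N := hw1.le
  have hNpos : 0 < N := by nlinarith
  have hrpos : 0 < |r| := lt_of_lt_of_le hs₀pos hr1
  have hRr := hRres r hrpos hr2
  -- good vector z
  obtain ⟨z, hz1, hz2⟩ := exists_good_vector (Rres r) hNpos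
  set w := (R1 - 1) z with hwdef
  have hwz : w = R1 z - z := by
    rw [hwdef, ContinuousLinearMap.sub_apply, ContinuousLinearMap.one_apply]
  -- Identity A
  have hxmem : Rres r w ∈ A.domain := res_mem hRr w
  have hIDA : ∫ τ in (0:ℝ)..t, Complex.exp (-(Complex.I*r*τ)) • T τ w
      = Rres r w - Complex.exp (-(Complex.I*r*t)) • T t (Rres r w) := by
    have hki := key_integral hT hA hxmem r t ht0
    have hval : A ⟨Rres r w, hxmem⟩ - (Complex.I*r) • (Rres r w) = -w := by
      rw [res_val hRr w hxmem]
      module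
    have he : (fun τ : ℝ => Complex.exp (-(Complex.I*r*τ)) •
        (T τ (A ⟨Rres r w, hxmem⟩ - (Complex.I*r) • (Rres r w))))
        = fun τ : ℝ => -(Complex.exp (-(Complex.I*r*τ)) • T τ w) := by
      funext τ
      rw [hval, map_neg, smul_neg]
    rw [he, intervalIntegral.integral_neg] at hki
    have := neg_eq_iff_eq_neg.mp hki
    rw [this]
    module
  -- Identity B
  have hx1mem : R1 z ∈ A.domain := res_mem hR1 z
  have hval1 : A ⟨R1 z, hx1mem⟩ = R1 z - z := by
    rw [res_val hR1 z hx1mem, one_smul]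
  have hcont1 : ContinuousOn (fun τ : ℝ => Complex.exp (-(Complex.I*r*τ)) • T τ w) (Icc 0 t) := by
    apply ContinuousOn.smul _ ((hT.strongContinuity w).mono Icc_subset_Ici_self)
    apply Continuous.continuousOn
    exact Complex.continuous_exp.comp (continuous_const.mul Complex.continuous_ofReal).neg
  have hcont2 : ContinuousOn (fun τ : ℝ => (Complex.exp (-(Complex.I*r*τ)) * (Complex.I*r)) • T τ (R1 z)) (Icc 0 t) := by
    apply ContinuousOn.smul _ ((hT.strongContinuity (R1 z)).mono Icc_subset_Ici_self)
    apply Continuous.continuousOn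
    exact (Complex.continuous_exp.comp (continuous_const.mul Complex.continuous_ofReal).neg).mul continuous_const
  have hint1 : IntervalIntegrable (fun τ : ℝ => Complex.exp (-(Complex.I*r*τ)) • T τ w) volume 0 t := by
    apply ContinuousOn.intervalIntegrable
    rwa [uIcc_of_le ht0]
  have hint2 : IntervalIntegrable (fun τ : ℝ => (Complex.exp (-(Complex.I*r*τ)) * (Complex.I*r)) • T τ (R1 z)) volume 0 t := by
    apply ContinuousOn.intervalIntegrable
    rwa [uIcc_of_le ht0]
  have hIDB : ∫ τ in (0:ℝ)..t, Complex.exp (-(Complex.I*r*τ)) • T τ w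
      = (Complex.exp (-(Complex.I*r*t)) • T t (R1 z) - R1 z)
        + ∫ τ in (0:ℝ)..t, (Complex.exp (-(Complex.I*r*τ)) * (Complex.I*r)) • T τ (R1 z) := by
    have hki := key_integral hT hA hx1mem r t ht0
    rw [hval1] at hki
    have he : (fun τ : ℝ => Complex.exp (-(Complex.I*r*τ)) • (T τ ((R1 z - z) - (Complex.I*r) • (R1 z))))
        = fun τ : ℝ => Complex.exp (-(Complex.I*r*τ)) • T τ w
          - (Complex.exp (-(Complex.I*r*τ)) * (Complex.I*r)) • T τ (R1 z) := by
      funext τ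
      rw [map_sub, _root_.map_smul, smul_sub, smul_smul, hwz]
    rw [he, intervalIntegral.integral_sub hint1 hint2] at hki
    linear_combination (norm := module) hki
  -- Norm bound on the integral
  have hTw_bound : ∀ v : X, ∀ τ : ℝ, 0 ≤ τ → ‖T τ v‖ ≤ M * ‖v‖ := by
    intro v τ hτ
    calc ‖T τ v‖ ≤ ‖T τ‖ * ‖v‖ := (T τ).le_opNorm v
    _ ≤ M * ‖v‖ := mul_le_mul_of_nonneg_right (hM τ hτ) (norm_nonneg _)
  have hR1z : ‖R1 z‖ ≤ R := by
    calc ‖R1 z‖ ≤ ‖R1‖ * ‖z‖ := R1.le_opNorm z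
    _ ≤ R := by nlinarith [hz1, hR0, norm_nonneg z]
  have hIntBnd : ‖∫ τ in (0:ℝ)..t, Complex.exp (-(Complex.I*r*τ)) • T τ w‖
      ≤ M * R + R + |r| * t * (M * R) := by
    rw [hIDB]
    have b1 : ‖Complex.exp (-(Complex.I*r*t)) • T t (R1 z)‖ ≤ M * R := by
      rw [norm_smul, exp_norm_one, one_mul]
      calc ‖T t (R1 z)‖ ≤ M * ‖R1 z‖ := hTw_bound _ t ht0
      _ ≤ M * R := mul_le_mul_of_nonneg_left hR1z (by linarith)
    have b2 : ‖∫ τ in (0:ℝ)..t, (Complex.exp (-(Complex.I*r*τ)) * (Complex.I*r)) • T τ (R1 z)‖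
        ≤ |r| * (M * R) * t := by
      have hb : ∀ τ ∈ Set.uIoc (0:ℝ) t, ‖(Complex.exp (-(Complex.I*r*τ)) * (Complex.I*r)) • T τ (R1 z)‖ ≤ |r| * (M * R) := by
        intro τ hτ
        rw [Set.uIoc_of_le ht0] at hτ
        rw [norm_smul, norm_mul, exp_norm_one, one_mul]
        have e : ‖Complex.I * (r:ℂ)‖ = |r| := by
          rw [norm_mul, Complex.norm_I, one_mul, Complex.norm_real, Real.norm_eq_abs]
        rw [e]
        have h1 : ‖T τ (R1 z)‖ ≤ M * R := by
          calc ‖T τ (R1 z)‖ ≤ M * ‖R1 z‖ := hTw_bound _ τ hτ.1.le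
          _ ≤ M * R := mul_le_mul_of_nonneg_left hR1z (by linarith)
        exact mul_le_mul_of_nonneg_left h1 (abs_nonneg _)
      have := intervalIntegral.norm_integral_le_of_norm_le_const hb
      rwa [sub_zero, abs_of_nonneg ht0] at this
    calc ‖(Complex.exp (-(Complex.I*r*t)) • T t (R1 z) - R1 z)
        + ∫ τ in (0:ℝ)..t, (Complex.exp (-(Complex.I*r*τ)) * (Complex.I*r)) • T τ (R1 z)‖
        ≤ ‖Complex.exp (-(Complex.I*r*t)) • T t (R1 z) - R1 z‖
          + ‖∫ τ in (0:ℝ)..t, (Complex.exp (-(Complex.I*r*τ)) * (Complex.I*r)) • T τ (R1 z)‖ :=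
        norm_add_le _ _
    _ ≤ (‖Complex.exp (-(Complex.I*r*t)) • T t (R1 z)‖ + ‖R1 z‖)
          + ‖∫ τ in (0:ℝ)..t, (Complex.exp (-(Complex.I*r*τ)) * (Complex.I*r)) • T τ (R1 z)‖ := by
        have := norm_sub_le (Complex.exp (-(Complex.I*r*t)) • T t (R1 z)) (R1 z)
        linarith
    _ ≤ M * R + R + |r| * t * (M * R) := by
        have : |r| * (M * R) * t = |r| * t * (M * R) := by ring
        rw [this] at b2
        linarith
  -- master inequality
  set F := ‖(T t).comp (R1 - 1)‖ with hFdef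
  have hF0 : 0 ≤ F := norm_nonneg _
  have hTtRrw : ‖T t (Rres r w)‖ ≤ N * F := by
    rw [T_comm_res hT hA hRr ht0 w]
    calc ‖Rres r (T t w)‖ ≤ N * ‖T t w‖ := (Rres r).le_opNorm _
    _ ≤ N * F := by
        apply mul_le_mul_of_nonneg_left _ hNpos.le
        have e : T t w = ((T t).comp (R1 - 1)) z := rfl
        rw [e]
        calc ‖((T t).comp (R1 - 1)) z‖ ≤ F * ‖z‖ := ((T t).comp (R1 - 1)).le_opNorm z
        _ ≤ F := by nlinarith [norm_nonneg ((T t).comp (R1 - 1))]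
  have hupper : ‖Rres r w‖ ≤ (M * R + R + |r| * t * (M * R)) + N * F := by
    have he : Rres r w = (∫ τ in (0:ℝ)..t, Complex.exp (-(Complex.I*r*τ)) • T τ w)
        + Complex.exp (-(Complex.I*r*t)) • T t (Rres r w) := by
      linear_combination (norm := module) -hIDA
    calc ‖Rres r w‖ = ‖(∫ τ in (0:ℝ)..t, Complex.exp (-(Complex.I*r*τ)) • T τ w)
        + Complex.exp (-(Complex.I*r*t)) • T t (Rres r w)‖ := congrArg Norm.norm he
    _ ≤ ‖∫ τ in (0:ℝ)..t, Complex.exp (-(Complex.I*r*τ)) • T τ w‖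
        + ‖Complex.exp (-(Complex.I*r*t)) • T t (Rres r w)‖ := norm_add_le _ _
    _ ≤ (M * R + R + |r| * t * (M * R)) + N * F := by
          rw [norm_smul, exp_norm_one, one_mul]
          linarith
  have hlower : (|r|/2) * ((3/4) * N) - R ≤ ‖Rres r w‖ := by
    have h1 := res_comb_norm hR1 hRr hr2 z
    rw [← hwdef] at h1
    have h2 : (|r|/2) * ((3/4) * N) ≤ (|r|/2) * ‖Rres r z‖ :=
      mul_le_mul_of_nonneg_left hz2.le (by positivity)
    linarith
  -- conclude
  have hmaster : (3/8) * |r| * N ≤ M * R + 2*R + |r| * t * (M * R) + N * F := by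
    nlinarith [hlower, hupper]
  show (1/8) * s₀ ≤ F
  have := final_arith (s₀ := s₀) (a := |r|) (N := N) (F := F) (M := M) (R := R) (D := D) (t := t)
    hDdef hM1 hR0 ht1 hr1 hr2 hs₀pos hst3 hNbig hF0 (by linarith [hmaster])
  linarith


end AuxLemmas

/-- **Corollary 2.3.**  Let `T` be a bounded C₀-semigroup with generator `A`, with
`iσ(A) ∩ ℝ = {0}` (so `is ∈ ρ(A)` for `0 < |s| ≤ 1`; `Rres s` denotes `R(is, A)`), and
suppose `max{‖s R(is,A)‖, ‖s R(-is,A)‖} → ∞` as `s → 0`.  Let `m` be the minimal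
dominating function `m(s) = sup {‖R(ir,A)‖ : s ≤ |r| ≤ 1}` and let `minv` be any
right-inverse of `m` (defined on the range of `m`).  Here `R1 = R(1, A)`, so that
`A R(1,A) = R1 - 1`.  Then there are constants `c, C > 0` with
`‖T(t) A R(1,A)‖ ≥ c · m⁻¹(C t)` for all sufficiently large `t`. -/
theorem lower_bound_decay
    {X : Type*} [NormedAddCommGroup X] [NormedSpace ℂ X] [CompleteSpace X]
    (T : ℝ → X →L[ℂ] X) (A : X →ₗ.[ℂ] X)
    (hT : IsC0Semigroup T) (hTb : IsBoundedSG T) (hA : IsGenerator T A)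
    (hspec : bSpec A = {0})
    (R1 : X →L[ℂ] X) (hR1 : IsResolventAt A 1 R1)
    (Rres : ℝ → X →L[ℂ] X)
    (hRres : ∀ r : ℝ, 0 < |r| → |r| ≤ 1 → IsResolventAt A (Complex.I * (r : ℂ)) (Rres r))
    (hL : ∀ K : ℝ, ∃ δ : ℝ, 0 < δ ∧ δ ≤ 1 ∧ ∀ s : ℝ, 0 < |s| → |s| < δ →
      K ≤ max (|s| * ‖Rres s‖) (|s| * ‖Rres (-s)‖))
    (m : ℝ → ℝ)
    (hm : ∀ s : ℝ, 0 < s → s ≤ 1 →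
      IsLUB {y : ℝ | ∃ r : ℝ, s ≤ |r| ∧ |r| ≤ 1 ∧ y = ‖Rres r‖} (m s))
    (minv : ℝ → ℝ)
    (hminv : ∀ y : ℝ, (∃ s ∈ Set.Ioc (0 : ℝ) 1, m s = y) →
      minv y ∈ Set.Ioc (0 : ℝ) 1 ∧ m (minv y) = y) :
    ∃ c C : ℝ, 0 < c ∧ 0 < C ∧ ∃ t₀ : ℝ, ∀ t : ℝ, t₀ ≤ t →
      c * minv (C * t) ≤ ‖(T t).comp (R1 - 1)‖ := by
  exact lower_bound_decay' T A hT hTb hA R1 hR1 Rres hRres hL m hm minv hminv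

end KTpaper
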